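/- Let k ≥ 1, let p < q be odd primes with n = 2^k·p·q abundant, and set M = 2^{k+1} - 1. If p ≤ M, then n is pseudoperfect. -/

import Mathlib

/-- Sum of the positive divisors of `n`. -/
def sigma' (n : ℕ) : ℕ := ∑ d ∈ n.divisors, d

/-- `n` is abundant if `σ(n) > 2n`. -/
def Abundant (n : ℕ) : Prop := 2 * n < sigma' n

/-- `n` is pseudoperfect (in the weak sense) if some subset of its proper divisors sums to `n`. -/
def Pseudoperfect (n : ℕ) : Prop := ∃ s ⊆ n.properDivisors, ∑ d ∈ s, d = n

/-- `n` is weird if it is abundant and no subset of its proper divisors sums to `n`. -/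
def Weird (n : ℕ) : Prop := Abundant n ∧ ¬ Pseudoperfect n

/-- A number less than `2^m` is the sum of its binary digits below `m`. -/
lemma sum_bits (m : ℕ) : ∀ p : ℕ, p < 2 ^ m →
    ∑ j ∈ (Finset.range m).filter (fun j => p.testBit j), 2 ^ j = p := by
  induction m with
  | zero => intro p hp; interval_cases p; simp
  | succ m ih =>
    intro p hp
    have h2 : p / 2 < 2 ^ m := by
      rw [Nat.div_lt_iff_lt_mul (by norm_num)]
      calc p < 2 ^ (m + 1) := hp
        _ = 2 ^ m * 2 := by ring
    have IH := ih (p / 2) h2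
    rw [Finset.sum_filter] at IH ⊢
    rw [Finset.sum_range_succ']
    have e1 : ∀ j, (if p.testBit (j + 1) then 2 ^ (j + 1) else 0)
        = 2 * (if (p / 2).testBit j then 2 ^ j else 0) := by
      intro j
      rw [Nat.testBit_add_one]
      split <;> ring
    simp only [e1, ← Finset.mul_sum, IH]
    have : (if p.testBit 0 then 2 ^ 0 else 0) = p % 2 := by
      rw [Nat.testBit_zero]
      rcases Nat.mod_two_eq_zero_or_one p with h | h <;> simp [h]
    rw [this]
    omega

theorem pseudoperfect_of_small_p (k p q : ℕ) (hk : 1 ≤ k) (hp : p.Prime) (hq : q.Prime)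
    (hop : Odd p) (hoq : Odd q) (hpq : p < q) (hab : Abundant (2 ^ k * p * q))
    (hpM : p ≤ 2 ^ (k + 1) - 1) : Pseudoperfect (2 ^ k * p * q) := by
  have hp1 : 1 < p := hp.one_lt
  have hq0 : 0 < q := hq.pos
  have hp0 : 0 < p := hp.pos
  have hplt : p < 2 ^ (k + 1) := by
    have : (1:ℕ) ≤ 2 ^ (k+1) := Nat.one_le_two_pow
    omega
  -- the two families of divisors
  set s₁ : Finset ℕ := (Finset.range k).image (fun j => 2 ^ j * (p * q)) with hs₁
  set s₂ : Finset ℕ :=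
    ((Finset.range (k + 1)).filter (fun j => p.testBit j)).image (fun j => 2 ^ j * q) with hs₂
  have hinj1 : Set.InjOn (fun j => 2 ^ j * (p * q)) (Finset.range k) := by
    intro a _ b _ h
    have := Nat.eq_of_mul_eq_mul_right (Nat.mul_pos hp0 hq0) h
    exact Nat.pow_right_injective (le_refl 2) this
  have hinj2 : Set.InjOn (fun j => 2 ^ j * q) ((Finset.range (k+1)).filter (fun j => p.testBit j)) := by
    intro a _ b _ h
    have := Nat.eq_of_mul_eq_mul_right hq0 h
    exact Nat.pow_right_injective (le_refl 2) this
  have hdisj : Disjoint s₁ s₂ := by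
    rw [Finset.disjoint_left]
    intro x hx1 hx2
    simp only [hs₁, hs₂, Finset.mem_image, Finset.mem_filter, Finset.mem_range] at hx1 hx2
    obtain ⟨a, _, ha⟩ := hx1
    obtain ⟨b, _, hb⟩ := hx2
    have h : 2 ^ a * p = 2 ^ b := by
      have : 2 ^ a * p * q = 2 ^ b * q := by rw [← mul_assoc] at ha; rw [ha, hb]
      exact Nat.eq_of_mul_eq_mul_right hq0 this
    have hdvd : p ∣ 2 ^ b := ⟨2 ^ a, by rw [← h]; ring⟩
    have hp2 : p = 2 := (Nat.prime_dvd_prime_iff_eq hp Nat.prime_two).mp (hp.dvd_of_dvd_pow hdvd)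
    rw [hp2] at hop
    exact absurd hop (by decide)
  refine ⟨s₁ ∪ s₂, ?_, ?_⟩
  · intro x hx
    rw [Nat.mem_properDivisors]
    rcases Finset.mem_union.mp hx with hx | hx <;>
      simp only [hs₁, hs₂, Finset.mem_image, Finset.mem_filter, Finset.mem_range] at hx
    · obtain ⟨j, hj, rfl⟩ := hx
      rw [mul_assoc 
        (2 ^ k)]
      constructor
      · exact Nat.mul_dvd_mul_right (pow_dvd_pow 2 hj.le) (p * q)
      · exact (Nat.mul_lt_mul_right (Nat.mul_pos hp0 hq0)).mpr (Nat.pow_lt_pow_right one_lt_two hj)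
    · obtain ⟨j, ⟨hj, _⟩, rfl⟩ := hx
      constructor
      · have h1 : 2 ^ j * q ∣ 2 ^ k * q :=
          Nat.mul_dvd_mul_right (pow_dvd_pow 2 (Nat.lt_succ_iff.mp hj)) q
        have h2 : 2 ^ k * q ∣ 2 ^ k * p * q := ⟨p, by ring⟩
        exact h1.trans h2
      · calc 2 ^ j * q ≤ 2 ^ k * q :=
              Nat.mul_le_mul_right q (Nat.pow_le_pow_right (by norm_num) (Nat.lt_succ_iff.mp hj))
          _ = 2 ^ k * 1 * q := by ring
          _ < 2 ^ k * p * q := by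
              exact (Nat.mul_lt_mul_right hq0).mpr
                ((Nat.mul_lt_mul_left (Nat.two_pow_pos k)).mpr hp1)
  · rw [Finset.sum_union hdisj, Finset.sum_image hinj1, Finset.sum_image hinj2,
      ← Finset.sum_mul, ← Finset.sum_mul, sum_bits (k+1) p hplt,
      Nat.geomSum_eq (le_refl 2) k]
    have h2k : 1 ≤ 2 ^ k := Nat.one_le_two_pow
    have : (2 ^ k - 1) / (2 - 1) = 2 ^ k - 1 := by norm_num
    rw [this]
    have hle : 1 * (p * q) ≤ 2 ^ k * (p * q) :=
      Nat.mul_le_mul_right (p * q) h2k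
    rw [Nat.sub_mul, one_mul] at *
    rw [Nat.sub_add_cancel hle, ← mul_assoc]
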